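/- For every c > 0, every finite T > 0, and every continuous function X = (x, z1, z2) : [−2, T) → ℝ² × ℝ × ℝ that is differentiable at every t ∈ (0, T) and satisfies there ẋ(t) = c φ(z2(t−2)) g(x(t), z1(t−1)) + c (1−φ(z2(t−2))) A0 x(t), ż1(t) = −z1(t), ż2(t) = −z2(t), the function X is bounded on [−2, T): sup_{t∈[−2,T)} |X(t)| < ∞. Hence the time-delay system (S_c) is forward complete: no solution blows up in finite time. -/

import Mathlib

open Set Matrix

/-- The matrix `A0`. -/
noncomputable def A0 : Matrix (Fin 2) (Fin 2) ℝ := !![-0.1, 0.5; -2, 0]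

/-- The matrix `A1`. -/
noncomputable def A1 : Matrix (Fin 2) (Fin 2) ℝ := !![0, 2; -0.5, -0.1]

/-- The saturation function `φ`. -/
noncomputable def phi (s : ℝ) : ℝ := if s < 0 then 0 else if s ≤ 1 then s else 1

/-- `ℝ²` with the Euclidean norm. -/
abbrev E2 : Type := EuclideanSpace ℝ (Fin 2)

/-- Action of a `2 × 2` matrix on `ℝ²`. -/
noncomputable def act (A : Matrix (Fin 2) (Fin 2) ℝ) (x : E2) : E2 :=
  Matrix.toEuclideanLin A x

/-- The nonlinearity `g(x,u) = (1+|x|²)(φ(u) A1 + (1-φ(u)) A0) x`. -/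
noncomputable def gfun (x : E2) (u : ℝ) : E2 :=
  (1 + ‖x‖ ^ 2) • act (phi u • A1 + (1 - phi u) • A0) x

/-- `X = (x, z1, z2) : [-2,∞) → ℝ² × ℝ × ℝ` is a solution of the time-delay system `(S_c)`. -/
def IsSolution (c : ℝ) (x : ℝ → E2) (z1 z2 : ℝ → ℝ) : Prop :=
  ContinuousOn x (Ici (-2 : ℝ)) ∧ ContinuousOn z1 (Ici (-2 : ℝ)) ∧
  ContinuousOn z2 (Ici (-2 : ℝ)) ∧
  ∀ t : ℝ, 0 < t →
    HasDerivAt x ((c * phi (z2 (t - 2))) • gfun (x t) (z1 (t - 1))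
      + (c * (1 - phi (z2 (t - 2)))) • act A0 (x t)) t
    ∧ HasDerivAt z1 (-(z1 t)) t ∧ HasDerivAt z2 (-(z2 t)) t

/-- Euclidean norm `|X(t)|` of the full state `(x(t), z1(t), z2(t)) ∈ ℝ⁴`. -/
noncomputable def Xnorm (x : ℝ → E2) (z1 z2 : ℝ → ℝ) (t : ℝ) : ℝ :=
  Real.sqrt (‖x t‖ ^ 2 + (z1 t) ^ 2 + (z2 t) ^ 2)

/-- Norm `‖X0‖ = sup_{τ ∈ [-2,0]} |X(τ)|` of the initial segment of a solution. -/
noncomputable def initNorm (x : ℝ → E2) (z1 z2 : ℝ → ℝ) : ℝ :=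
  sSup (Xnorm x z1 z2 '' Icc (-2 : ℝ) 0)

/-! ### Auxiliary lemmas -/

lemma phi_nonneg (s : ℝ) : 0 ≤ phi s := by unfold phi; split_ifs <;> linarith

lemma phi_le_one (s : ℝ) : phi s ≤ 1 := by unfold phi; split_ifs <;> linarith

lemma phi_lip (a b : ℝ) : |phi a - phi b| ≤ |a - b| := by
  have h1 : a - b ≤ |a - b| := le_abs_self _
  have h2 : b - a ≤ |a - b| := by rw [abs_sub_comm]; exact le_abs_self _
  have h3 : (0:ℝ) ≤ |a - b| := abs_nonneg _
  rw [abs_sub_le_iff]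
  constructor <;> (unfold phi; split_ifs <;> linarith)

lemma act_apply (A : Matrix (Fin 2) (Fin 2) ℝ) (y : E2) (i : Fin 2) :
    act A y i = A i 0 * y 0 + A i 1 * y 1 := by
  simp [act, Matrix.toEuclideanLin, Matrix.toLin'_apply, Matrix.mulVec, dotProduct,
    Fin.sum_univ_two]

lemma norm_sq_eq (y : E2) : ‖y‖^2 = (y 0)^2 + (y 1)^2 := by
  rw [EuclideanSpace.norm_eq, Real.sq_sqrt (by positivity)]
  simp [Fin.sum_univ_two]

lemma comp_proj {f : ℝ → E2} {f' : E2} {t : ℝ} (h : HasDerivAt f f' t) (i : Fin 2) :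
    HasDerivAt (fun τ => f τ i) (f' i) t := by
  have := (EuclideanSpace.proj (𝕜 := ℝ) i).hasFDerivAt.comp_hasDerivAt t h
  exact this

lemma comp0 (κ1 κ2 w : ℝ) (y : E2) :
    (κ1 • gfun y w + κ2 • act A0 y) 0
      = κ1*(1+‖y‖^2)*((-(1 - phi w)/10)*(y 0) + (1/2 + 3/2*phi w)*(y 1))
        + κ2*((-1/10)*(y 0) + (1/2)*(y 1)) := by
  have h0 : (κ1 • gfun y w + κ2 • act A0 y) 0
      = κ1 * gfun y w 0 + κ2 * act A0 y 0 := rfl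
  rw [h0]
  have h1 : gfun y w 0 = (1+‖y‖^2) * (act (phi w • A1 + (1 - phi w) • A0) y 0) := rfl
  rw [h1, act_apply, act_apply]
  simp only [Matrix.add_apply, Matrix.smul_apply, A0, A1, smul_eq_mul]
  norm_num [Matrix.cons_val_zero, Matrix.cons_val_one, Matrix.head_cons]
  ring

lemma comp1 (κ1 κ2 w : ℝ) (y : E2) :
    (κ1 • gfun y w + κ2 • act A0 y) 1
      = κ1*(1+‖y‖^2)*((-2 + 3/2*phi w)*(y 0) + (-(phi w)/10)*(y 1))
        + κ2*((-2)*(y 0)) := by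
  have h0 : (κ1 • gfun y w + κ2 • act A0 y) 1
      = κ1 * gfun y w 1 + κ2 * act A0 y 1 := rfl
  rw [h0]
  have h1 : gfun y w 1 = (1+‖y‖^2) * (act (phi w • A1 + (1 - phi w) • A0) y 1) := rfl
  rw [h1, act_apply, act_apply]
  simp only [Matrix.add_apply, Matrix.smul_apply, A0, A1, smul_eq_mul]
  norm_num [Matrix.cons_val_zero, Matrix.cons_val_one, Matrix.head_cons]
  ring

/-! ### Quadratic-form inequalities for the Lyapunov family
`P(p) = [[2 - 3p/2, (2p-1)/20], [(2p-1)/20, 1/2 + 3p/2]]`. -/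

lemma Lq (s p u v : ℝ) (hp0 : 0 ≤ p) (hp1 : p ≤ 1)
    (hsp : |s - p| ≤ 1/40) :
    (-1/5 - p/10 + s/4)*u^2 + 2*(1/200 - 94/25*p + 15/4*s)*u*v
      + (-1/20 + p/10 - s/4)*v^2 ≤ 0 := by
  obtain ⟨hl, hr⟩ := abs_le.mp hsp
  have he2 : (s - p)^2 ≤ 1/1600 := by nlinarith
  have hq11 : (-1/5 - p/10 + s/4) ≤ -(1/40) := by linarith
  have hdet : (-1/5 - p/10 + s/4)*(-1/20 + p/10 - s/4)
      - (1/200 - 94/25*p + 15/4*s)^2 ≥ 0 := by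
    have idt : (-1/5 - p/10 + s/4)*(-1/20 + p/10 - s/4)
        - (1/200 - 94/25*p + 15/4*s)^2
        = 399/40000 + 113/5000*(p*(1-p)) - 113/8*(s-p)^2 := by ring
    rw [idt]
    have := mul_nonneg hp0 (by linarith : (0:ℝ) ≤ 1 - p)
    linarith
  by_contra hcon
  push_neg at hcon
  nlinarith [sq_nonneg ((-1/5 - p/10 + s/4)*u + (1/200 - 94/25*p + 15/4*s)*v),
    mul_nonneg hdet (sq_nonneg v)]

lemma LS (p u v : ℝ) (hp0 : 0 ≤ p) (hp1 : p ≤ 1) :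
    (-1/5 - p/10)*u^2 + 2*(1/200 - 94/25*p)*u*v + (-1/20 + p/10)*v^2 ≤ 5*(u^2+v^2) := by
  nlinarith [sq_nonneg (u+v), sq_nonneg (u-v), mul_nonneg hp0 (sq_nonneg (u+v)),
    mul_nonneg hp0 (sq_nonneg (u-v)), sq_nonneg u, sq_nonneg v,
    mul_nonneg (by linarith : (0:ℝ) ≤ 1-p) (sq_nonneg (u+v)),
    mul_nonneg (by linarith : (0:ℝ) ≤ 1-p) (sq_nonneg (u-v))]

lemma LV (p u v : ℝ) (hp0 : 0 ≤ p) (hp1 : p ≤ 1) :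
    (2/5)*(u^2+v^2) ≤ (2 - 3/2*p)*u^2 + 2*((2*p-1)/20)*(u*v) + (1/2 + 3/2*p)*v^2 := by
  nlinarith [sq_nonneg (u+v), sq_nonneg (u-v), mul_nonneg hp0 (sq_nonneg (u+v)),
    mul_nonneg hp0 (sq_nonneg (u-v)), sq_nonneg u, sq_nonneg v,
    mul_nonneg (by linarith : (0:ℝ) ≤ 1-p) (sq_nonneg (u+v)),
    mul_nonneg (by linarith : (0:ℝ) ≤ 1-p) (sq_nonneg (u-v))]

lemma core_ineq (c p s μ u v r u' v' : ℝ) (hc : 0 < c) (hp0 : 0 ≤ p) (hp1 : p ≤ 1)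
    (hsp : |s - p| ≤ 1/40)
    (hμ0 : 0 ≤ μ) (hμ1 : μ ≤ 1) (hr : 0 ≤ r)
    (hu' : u' = c*μ*(1+r)*((-(1-s)/10)*u + (1/2 + 3/2*s)*v)
      + c*(1-μ)*((-1/10)*u + (1/2)*v))
    (hv' : v' = c*μ*(1+r)*((-2 + 3/2*s)*u + (-s/10)*v) + c*(1-μ)*((-2)*u)) :
    (2 - 3/2*p)*(2*u*u') + 2*((2*p-1)/20)*(u'*v + u*v') + (1/2 + 3/2*p)*(2*v*v')
      ≤ (25/2*c) * ((2 - 3/2*p)*u^2 + 2*((2*p-1)/20)*(u*v) + (1/2 + 3/2*p)*v^2) := by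
  subst hu' hv'
  set α := c*μ*(1+r) with hα
  set β := c*(1-μ) with hβ
  have hα0 : 0 ≤ α := by positivity
  have hβ0 : 0 ≤ β := by
    have : 0 ≤ 1 - μ := by linarith
    positivity
  have hβc : β ≤ c := by nlinarith
  have hFq := Lq s p u v hp0 hp1 hsp
  have hFs := LS p u v hp0 hp1
  have hLV := LV p u v hp0 hp1
  have key : (2 - 3/2*p)*(2*u*(α*((-(1-s)/10)*u + (1/2 + 3/2*s)*v) + β*((-1/10)*u + (1/2)*v)))
      + 2*((2*p-1)/20)*((α*((-(1-s)/10)*u + (1/2 + 3/2*s)*v) + β*((-1/10)*u + (1/2)*v))*v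
        + u*(α*((-2 + 3/2*s)*u + (-s/10)*v) + β*((-2)*u)))
      + (1/2 + 3/2*p)*(2*v*(α*((-2 + 3/2*s)*u + (-s/10)*v) + β*((-2)*u)))
      = α * ((-1/5 - p/10 + s/4)*u^2 + 2*(1/200 - 94/25*p + 15/4*s)*u*v
          + (-1/20 + p/10 - s/4)*v^2)
      + β * ((-1/5 - p/10)*u^2 + 2*(1/200 - 94/25*p)*u*v + (-1/20 + p/10)*v^2) := by
    ring
  rw [key]
  have h1 : α * ((-1/5 - p/10 + s/4)*u^2 + 2*(1/200 - 94/25*p + 15/4*s)*u*v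
      + (-1/20 + p/10 - s/4)*v^2) ≤ 0 := mul_nonpos_of_nonneg_of_nonpos hα0 hFq
  have h2 : β * ((-1/5 - p/10)*u^2 + 2*(1/200 - 94/25*p)*u*v + (-1/20 + p/10)*v^2)
      ≤ c * (5*(u^2+v^2)) := by
    calc β * _ ≤ β * (5*(u^2+v^2)) := mul_le_mul_of_nonneg_left hFs hβ0
    _ ≤ c * (5*(u^2+v^2)) := mul_le_mul_of_nonneg_right hβc (by positivity)
  nlinarith [mul_le_mul_of_nonneg_left hLV (le_of_lt hc)]

/-- The Lyapunov function `V(t) = x(t)ᵀ P(p) x(t)`. -/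
noncomputable def Vfun (p : ℝ) (x : ℝ → E2) (τ : ℝ) : ℝ :=
  (2 - 3/2*p) * (x τ 0)^2 + 2*((2*p-1)/20) * (x τ 0 * x τ 1) + (1/2 + 3/2*p) * (x τ 1)^2

lemma Vfun_hasDerivAt (p : ℝ) {x : ℝ → E2} {x' : E2} {t : ℝ} (h : HasDerivAt x x' t) :
    HasDerivAt (Vfun p x)
      ((2 - 3/2*p)*(2*(x t 0)*(x' 0)) + 2*((2*p-1)/20)*((x' 0)*(x t 1) + (x t 0)*(x' 1))
        + (1/2 + 3/2*p)*(2*(x t 1)*(x' 1))) t := by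
  have hu := comp_proj h 0
  have hv := comp_proj h 1
  have h1 := (hu.pow 2).const_mul (2 - 3/2*p)
  have h2 := (hu.mul hv).const_mul (2*((2*p-1)/20))
  have h3 := (hv.pow 2).const_mul (1/2 + 3/2*p)
  have hall := (h1.add h2).add h3
  refine hall.congr_deriv ?_
  ring

lemma Vfun_cont (p : ℝ) {x : ℝ → E2} {s : Set ℝ} (h : ContinuousOn x s) :
    ContinuousOn (Vfun p x) s := by
  have hu : ContinuousOn (fun τ => x τ 0) s :=
    (EuclideanSpace.proj (𝕜 := ℝ) (0 : Fin 2)).continuous.comp_continuousOn h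
  have hv : ContinuousOn (fun τ => x τ 1) s :=
    (EuclideanSpace.proj (𝕜 := ℝ) (1 : Fin 2)).continuous.comp_continuousOn h
  exact ((continuousOn_const.mul (hu.pow 2)).add
    (continuousOn_const.mul (hu.mul hv))).add (continuousOn_const.mul (hv.pow 2))

/-- If `f` is continuous on `[t1, T)` with nonpositive derivative on `(t1, T)`, then
`f t ≤ f t1` for all `t ∈ [t1, T)`. -/
lemma le_left_of_deriv_nonpos {f : ℝ → ℝ} {t1 T : ℝ} (h1 : t1 < T)
    (hf : ContinuousOn f (Ico t1 T))
    (hd : ∀ t ∈ Ioo t1 T, ∃ f', HasDerivAt f f' t ∧ f' ≤ 0) :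
    ∀ t ∈ Ico t1 T, f t ≤ f t1 := by
  intro t ht
  rcases eq_or_lt_of_le ht.1 with he | hlt
  · rw [← he]
  · have hsub : Icc t1 t ⊆ Ico t1 T := fun τ hτ => ⟨hτ.1, lt_of_le_of_lt hτ.2 ht.2⟩
    have hmono : AntitoneOn f (Icc t1 t) := by
      apply antitoneOn_of_deriv_nonpos (convex_Icc t1 t) (hf.mono hsub)
      · intro τ hτ
        rw [interior_Icc] at hτ
        exact ((hd τ ⟨hτ.1, hτ.2.trans ht.2⟩).choose_spec.1.differentiableAt).differentiableWithinAt
      · intro τ hτ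
        rw [interior_Icc] at hτ
        obtain ⟨f', hf', hle⟩ := hd τ ⟨hτ.1, hτ.2.trans ht.2⟩
        rw [hf'.deriv]
        exact hle
    exact hmono (left_mem_Icc.mpr hlt.le) (right_mem_Icc.mpr hlt.le) hlt.le

/-- Forward completeness of `(S_c)`: every continuous `X = (x,z1,z2) : [-2,T) → ℝ²×ℝ×ℝ`
satisfying the delay equations on `(0,T)` is bounded on `[-2,T)`, so no solution blows up in
finite time. -/
theorem stmt_2 (c T : ℝ) (hc : 0 < c) (hT : 0 < T)
    (x : ℝ → E2) (z1 z2 : ℝ → ℝ)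
    (hcx : ContinuousOn x (Ico (-2 : ℝ) T))
    (hcz1 : ContinuousOn z1 (Ico (-2 : ℝ) T))
    (hcz2 : ContinuousOn z2 (Ico (-2 : ℝ) T))
    (hode : ∀ t ∈ Ioo (0 : ℝ) T,
      HasDerivAt x ((c * phi (z2 (t - 2))) • gfun (x t) (z1 (t - 1))
        + (c * (1 - phi (z2 (t - 2)))) • act A0 (x t)) t
      ∧ HasDerivAt z1 (-(z1 t)) t ∧ HasDerivAt z2 (-(z2 t)) t) :
    ∃ B : ℝ, ∀ t ∈ Ico (-2 : ℝ) T, Xnorm x z1 z2 t ≤ B := by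
  classical
  set p := phi (z1 (T - 1)) with hpdef
  have hp0 : 0 ≤ p := phi_nonneg _
  have hp1 : p ≤ 1 := phi_le_one _
  -- continuity of z1 at T - 1 gives a threshold t1 beyond which the input is nearly frozen
  have hca : ContinuousAt z1 (T - 1) :=
    hcz1.continuousAt (Ico_mem_nhds (by linarith) (by linarith))
  obtain ⟨η, hη, hball⟩ := Metric.continuousAt_iff.mp hca (1/40) (by norm_num)
  set t1 := max (T - η/2) (T/2) with ht1def
  have ht1T : t1 < T := max_lt (by linarith) (by linarith)
  have ht10 : 0 < t1 := lt_of_lt_of_le (by linarith : (0:ℝ) < T/2) (le_max_right _ _)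
  have hclose : ∀ t ∈ Ioo t1 T, |phi (z1 (t - 1)) - p| ≤ 1/40 := by
    intro t ht
    have htub : T - η/2 ≤ t1 := le_max_left _ _
    have hdist : dist (t - 1) (T - 1) < η := by
      rw [Real.dist_eq, abs_lt]
      constructor <;> nlinarith [ht.1, ht.2, htub]
    have := hball hdist
    rw [Real.dist_eq] at this
    calc |phi (z1 (t - 1)) - p| ≤ |z1 (t - 1) - z1 (T - 1)| := phi_lip _ _
    _ ≤ 1/40 := this.le
  set K : ℝ := 25/2*c with hKdef
  have hK0 : 0 ≤ K := by positivity
  -- subset relations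
  have hsub1 : Ico t1 T ⊆ Ico (-2 : ℝ) T := fun τ hτ => ⟨by linarith [hτ.1], hτ.2⟩
  have ht1mem : t1 ∈ Ico (-2 : ℝ) T := ⟨by linarith, ht1T⟩
  -- the weighted Lyapunov function W is nonincreasing on [t1, T)
  have hWcont : ContinuousOn (fun τ => Vfun p x τ * Real.exp ((-K)*τ)) (Ico t1 T) :=
    (Vfun_cont p (hcx.mono hsub1)).mul
      ((Real.continuous_exp.comp (continuous_const.mul continuous_id)).continuousOn)
  have hWderiv : ∀ t ∈ Ioo t1 T,
      ∃ w', HasDerivAt (fun τ => Vfun p x τ * Real.exp ((-K)*τ)) w' t ∧ w' ≤ 0 := by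
    intro t ht
    have htT : t ∈ Ioo (0:ℝ) T := ⟨ht10.trans ht.1, ht.2⟩
    obtain ⟨hx', _, _⟩ := hode t htT
    have hVd := Vfun_hasDerivAt p hx'
    rw [comp0, comp1] at hVd
    set r := ‖x t‖^2 with hr
    set u0 := x t 0 with hu0
    set v0 := x t 1 with hv0
    set s := phi (z1 (t - 1)) with hs
    set μ := phi (z2 (t - 2)) with hμ
    set U' := c*μ*(1+r)*((-(1-s)/10)*u0 + (1/2 + 3/2*s)*v0)
      + c*(1-μ)*((-1/10)*u0 + (1/2)*v0) with hU'
    set W' := c*μ*(1+r)*((-2 + 3/2*s)*u0 + (-s/10)*v0) + c*(1-μ)*((-2)*u0) with hW'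
    have hr0 : (0:ℝ) ≤ r := by rw [hr]; positivity
    have hcore := core_ineq c p s μ u0 v0 r U' W' hc hp0 hp1 (hclose t ht)
      (phi_nonneg _) (phi_le_one _) hr0 hU' hW'
    have hVeq : K * Vfun p x t = (25/2*c) * ((2 - 3/2*p)*u0^2
        + 2*((2*p-1)/20)*(u0*v0) + (1/2 + 3/2*p)*v0^2) := by
      rw [hKdef]
      unfold Vfun
      rw [← hu0, ← hv0]
      try ring
    rw [← hVeq] at hcore
    have hlin : HasDerivAt (fun τ : ℝ => (-K) * τ) (-K) t := by
      simpa using (hasDerivAt_id t).const_mul (-K)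
    have hexp' : HasDerivAt (fun τ : ℝ => Real.exp ((-K)*τ))
        (Real.exp ((-K)*t) * (-K)) t := hlin.exp
    have hWd := hVd.mul hexp'
    refine ⟨_, hWd, ?_⟩
    have hepos : (0:ℝ) < Real.exp ((-K)*t) := Real.exp_pos _
    have hDle : (2 - 3/2*p)*(2*u0*U') + 2*((2*p-1)/20)*(U'*v0 + u0*W')
        + (1/2 + 3/2*p)*(2*v0*W') - K * Vfun p x t ≤ 0 := by linarith
    have h7 := mul_nonpos_of_nonpos_of_nonneg hDle hepos.le
    have h8 : ((2 - 3/2*p)*(2*u0*U') + 2*((2*p-1)/20)*(U'*v0 + u0*W')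
        + (1/2 + 3/2*p)*(2*v0*W')) * Real.exp ((-K)*t)
        + Vfun p x t * (Real.exp ((-K)*t) * (-K))
        = ((2 - 3/2*p)*(2*u0*U') + 2*((2*p-1)/20)*(U'*v0 + u0*W')
          + (1/2 + 3/2*p)*(2*v0*W') - K * Vfun p x t) * Real.exp ((-K)*t) := by
      ring
    rw [h8]
    exact h7
  have hWle := le_left_of_deriv_nonpos ht1T hWcont hWderiv
  -- the function G = z1² + z2² is nonincreasing on [t1, T)
  have hGcont : ContinuousOn (fun τ => (z1 τ)^2 + (z2 τ)^2) (Ico t1 T) :=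
    ((hcz1.mono hsub1).pow 2).add ((hcz2.mono hsub1).pow 2)
  have hGderiv : ∀ t ∈ Ioo t1 T,
      ∃ g', HasDerivAt (fun τ => (z1 τ)^2 + (z2 τ)^2) g' t ∧ g' ≤ 0 := by
    intro t ht
    obtain ⟨_, hz1', hz2'⟩ := hode t ⟨ht10.trans ht.1, ht.2⟩
    refine ⟨_, (hz1'.pow 2).add (hz2'.pow 2), ?_⟩
    norm_num
    nlinarith [sq_nonneg (z1 t), sq_nonneg (z2 t)]
  have hGle := le_left_of_deriv_nonpos ht1T hGcont hGderiv
  -- bound on the compact part [-2, t1]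
  have hIccsub : Icc (-2:ℝ) t1 ⊆ Ico (-2:ℝ) T := fun τ hτ => ⟨hτ.1, lt_of_le_of_lt hτ.2 ht1T⟩
  have hXc : ContinuousOn (Xnorm x z1 z2) (Icc (-2:ℝ) t1) := by
    apply Real.continuous_sqrt.comp_continuousOn
    exact (((hcx.mono hIccsub).norm.pow 2).add ((hcz1.mono hIccsub).pow 2)).add
      ((hcz2.mono hIccsub).pow 2)
  obtain ⟨B1, hB1⟩ := isCompact_Icc.exists_bound_of_continuousOn hXc
  -- bound on the tail [t1, T)
  set C2 := Vfun p x t1 * Real.exp (K*(T - t1)) with hC2def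
  have hVt1nonneg : 0 ≤ Vfun p x t1 := by
    have := LV p (x t1 0) (x t1 1) hp0 hp1
    unfold Vfun
    nlinarith [sq_nonneg (x t1 0), sq_nonneg (x t1 1)]
  have htail : ∀ t ∈ Ico t1 T, Xnorm x z1 z2 t
      ≤ Real.sqrt ((5/2)*C2 + ((z1 t1)^2 + (z2 t1)^2)) := by
    intro t ht
    have hW := hWle t ht
    have hVt : Vfun p x t ≤ C2 := by
      have hexp1 : (0:ℝ) < Real.exp ((-K)*t) := Real.exp_pos _
      have step1 : Vfun p x t ≤ Vfun p x t1 * Real.exp ((-K)*t1) * Real.exp (K*t) := by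
        have := mul_le_mul_of_nonneg_right hW (Real.exp_pos (K*t)).le
        calc Vfun p x t = Vfun p x t * Real.exp ((-K)*t) * Real.exp (K*t) := by
              rw [mul_assoc, ← Real.exp_add]
              norm_num
        _ ≤ Vfun p x t1 * Real.exp ((-K)*t1) * Real.exp (K*t) := this
      have step2 : Vfun p x t1 * Real.exp ((-K)*t1) * Real.exp (K*t)
          = Vfun p x t1 * Real.exp (K*(t - t1)) := by
        rw [mul_assoc, ← Real.exp_add]
        ring_nf
      have step3 : Vfun p x t1 * Real.exp (K*(t - t1)) ≤ C2 := by
        rw [hC2def]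
        apply mul_le_mul_of_nonneg_left _ hVt1nonneg
        apply Real.exp_le_exp.mpr
        nlinarith [ht.2]
      linarith [step1, step2 ▸ step1]
    have hxnorm : ‖x t‖^2 ≤ (5/2)*C2 := by
      have hlv := LV p (x t 0) (x t 1) hp0 hp1
      have : (2/5)*((x t 0)^2 + (x t 1)^2) ≤ Vfun p x t := by
        unfold Vfun; linarith
      rw [norm_sq_eq]
      linarith
    have hg := hGle t ht
    unfold Xnorm
    apply Real.sqrt_le_sqrt
    linarith
  -- combine
  refine ⟨max B1 (Real.sqrt ((5/2)*C2 + ((z1 t1)^2 + (z2 t1)^2))), ?_⟩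
  intro t ht
  by_cases hcase : t ≤ t1
  · have := hB1 t ⟨ht.1, hcase⟩
    calc Xnorm x z1 z2 t ≤ ‖Xnorm x z1 z2 t‖ := le_abs_self _
    _ ≤ B1 := this
    _ ≤ max B1 _ := le_max_left _ _
  · push_neg at hcase
    exact le_trans (htail t ⟨hcase.le, ht.2⟩) (le_max_right _ _)
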